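/- Let ρ, ω be states on ℂ^d, let M > 0 be real with ρ ≤ Mω, and let γ be real with 0 ≤ γ ≤ M. Then the hockey-stick divergence satisfies E_γ(ρ‖ω) = Tr(ρ − γω)₊ ≤ 1 − γ/M. In particular E_γ(ρ‖ω) = 0 for every γ ≥ M. -/

import Mathlib

noncomputable section

namespace QIT

open Matrix
open scoped ComplexOrder

variable {n : Type*} [Fintype n] [DecidableEq n]

/-- Trace norm of a matrix: sum of absolute values of eigenvalues (0 if not Hermitian). -/
def traceNorm (X : Matrix n n ℂ) : ℝ :=
  if h : X.IsHermitian then ∑ i, |h.eigenvalues i| else 0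

/-- Trace of the positive part: sum of positive eigenvalues (0 if not Hermitian). -/
def trPos (X : Matrix n n ℂ) : ℝ :=
  if h : X.IsHermitian then ∑ i, max (h.eigenvalues i) 0 else 0

/-- Matrix logarithm via functional calculus (with log 0 = 0); 0 if not Hermitian. -/
def mlog (X : Matrix n n ℂ) : Matrix n n ℂ :=
  if h : X.IsHermitian then
    (h.eigenvectorUnitary : Matrix n n ℂ) *
      Matrix.diagonal (fun i => (Real.log (h.eigenvalues i) : ℂ)) *
      (star (h.eigenvectorUnitary : Matrix n n ℂ))
  else 0

/-- Umegaki relative entropy D(ρ‖ω) = Tr ρ (log ρ - log ω). -/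
def relEnt (ρ ω : Matrix n n ℂ) : ℝ :=
  ((ρ * (mlog ρ - mlog ω)).trace).re

/-- Von Neumann entropy. -/
def vN (ρ : Matrix n n ℂ) : ℝ :=
  if h : ρ.IsHermitian then -∑ i, (h.eigenvalues i) * Real.log (h.eigenvalues i) else 0

/-- A quantum state: positive semidefinite with unit trace. -/
def IsState (ρ : Matrix n n ℂ) : Prop := ρ.PosSemidef ∧ ρ.trace = 1

/-- Binary entropy. -/
def binH (ε : ℝ) : ℝ := -(ε * Real.log ε) - (1 - ε) * Real.log (1 - ε)

/-- g(x) = (1+x)log(1+x) - x log x. -/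
def gfun (x : ℝ) : ℝ := (1 + x) * Real.log (1 + x) - x * Real.log x


lemma trace_eq_sum_eigen {A : Matrix n n ℂ} (hA : A.IsHermitian) :
    A.trace = ∑ i, (hA.eigenvalues i : ℂ) := by
  conv_lhs => rw [hA.spectral_theorem, Unitary.conjStarAlgAut_apply]
  rw [Matrix.trace_mul_comm, ← mul_assoc, Unitary.coe_star_mul_self, one_mul,
    Matrix.trace_diagonal]
  rfl

lemma psd_trace_re_nonneg {A : Matrix n n ℂ} (hA : A.PosSemidef) :
    0 ≤ A.trace.re := by
  rw [trace_eq_sum_eigen hA.1, Complex.re_sum]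
  exact Finset.sum_nonneg fun i _ => by simpa using hA.eigenvalues_nonneg i

-- trace of product of PSD matrices has nonneg real part
open scoped MatrixOrder in
lemma psd_trace_mul_re_nonneg {P S : Matrix n n ℂ} (hP : P.PosSemidef) (hS : S.PosSemidef) :
    0 ≤ ((P * S).trace).re := by
  have h1 : P * S = P * CFC.sqrt S * CFC.sqrt S := by
    rw [mul_assoc, CFC.sqrt_mul_sqrt_self S hS.nonneg]
  rw [h1, Matrix.trace_mul_comm]
  have h2 : CFC.sqrt S * (P * CFC.sqrt S) = CFC.sqrt S * P * (CFC.sqrt S)ᴴ := by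
    rw [(CFC.sqrt_nonneg S).posSemidef.1, mul_assoc]
  rw [h2]
  exact psd_trace_re_nonneg (hP.mul_mul_conjTranspose_same _)

-- diagonal entries of PSD matrix have nonneg real part
lemma psd_diag_re_nonneg {P : Matrix n n ℂ} (hP : P.PosSemidef) (i : n) :
    0 ≤ (P i i).re := by
  have := hP.dotProduct_mulVec_nonneg (Pi.single i 1)
  have h : dotProduct (star (Pi.single i 1)) (P *ᵥ Pi.single i 1) = P i i := by
    simp [dotProduct, Matrix.mulVec_single, Pi.single_apply]
  rw [h] at this
  simpa using this.1  -- 0 ≤ z in ℂ order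


lemma trace_mul_diagonal' (D : Matrix n n ℂ) (e : n → ℂ) :
    (D * diagonal e).trace = ∑ i, D i i * e i := by
  simp [Matrix.trace, Matrix.diag, Matrix.mul_diagonal]

lemma re_trace_mul_le_trPos {C B : Matrix n n ℂ} (hC : C.PosSemidef)
    (hC1 : ((1 : Matrix n n ℂ) - C).PosSemidef) (hB : B.IsHermitian) :
    ((C * B).trace).re ≤ trPos B := by
  set V : Matrix n n ℂ := (hB.eigenvectorUnitary : Matrix n n ℂ) with hVdef
  have hVV : star V * V = 1 := Unitary.coe_star_mul_self _
  set D : Matrix n n ℂ := star V * C * V with hD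
  have hDpsd : D.PosSemidef := hC.conjTranspose_mul_mul_same V
  have hD1 : ((1 : Matrix n n ℂ) - D).PosSemidef := by
    have : (1 : Matrix n n ℂ) - D = star V * ((1 : Matrix n n ℂ) - C) * V := by
      rw [Matrix.mul_sub, Matrix.sub_mul, mul_one, hVV, hD]
    rw [this]
    exact hC1.conjTranspose_mul_mul_same V
  have htr : (C * B).trace = ∑ i, D i i * (hB.eigenvalues i : ℂ) := by
    conv_lhs => rw [hB.spectral_theorem, Unitary.conjStarAlgAut_apply]
    rw [show C * (V * diagonal (RCLike.ofReal ∘ hB.eigenvalues) * star V)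
        = (C * V * diagonal (RCLike.ofReal ∘ hB.eigenvalues)) * star V by
      simp [mul_assoc]]
    rw [Matrix.trace_mul_comm, ← mul_assoc, ← mul_assoc, ← hD, trace_mul_diagonal']
    rfl
  rw [htr, Complex.re_sum, trPos, dif_pos hB]
  apply Finset.sum_le_sum
  intro i _
  have h1 : 0 ≤ (D i i).re := psd_diag_re_nonneg hDpsd i
  have h2 : (D i i).re ≤ 1 := by
    have := psd_diag_re_nonneg hD1 i
    simp only [Matrix.sub_apply, Matrix.one_apply_eq, Complex.sub_re, Complex.one_re] at this
    linarith
  have h3 : (D i i * (hB.eigenvalues i : ℂ)).re = (D i i).re * hB.eigenvalues i := by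
    simp [Complex.mul_re]
  rw [h3]
  rcases le_or_gt 0 (hB.eigenvalues i) with h | h
  · rw [max_eq_left h]; nlinarith
  · rw [max_eq_right h.le]; nlinarith

lemma exists_proj {A : Matrix n n ℂ} (hA : A.IsHermitian) :
    ∃ Q : Matrix n n ℂ, Q.PosSemidef ∧ ((1 : Matrix n n ℂ) - Q).PosSemidef ∧
      ((Q * A).trace).re = trPos A := by
  set V : Matrix n n ℂ := (hA.eigenvectorUnitary : Matrix n n ℂ) with hVdef
  have hVV : star V * V = 1 := Unitary.coe_star_mul_self _
  have hVV' : V * star V = 1 := Unitary.coe_mul_star_self _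
  set q : n → ℂ := fun i => if 0 ≤ hA.eigenvalues i then 1 else 0 with hq
  refine ⟨V * diagonal q * star V, ?_, ?_, ?_⟩
  · refine (Matrix.posSemidef_diagonal_iff.mpr fun i => ?_).mul_mul_conjTranspose_same V
    by_cases h : 0 ≤ hA.eigenvalues i <;> simp [hq, h]
  · have : (1 : Matrix n n ℂ) - V * diagonal q * star V
        = V * diagonal (fun i => 1 - q i) * star V := by
      have : diagonal (fun i => 1 - q i) = 1 - diagonal q := by
        rw [← Matrix.diagonal_one, Matrix.diagonal_sub]
      rw [this, Matrix.mul_sub, mul_one, Matrix.sub_mul, hVV']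
    rw [this]
    refine (Matrix.posSemidef_diagonal_iff.mpr fun i => ?_).mul_mul_conjTranspose_same V
    by_cases h : 0 ≤ hA.eigenvalues i <;> simp [hq, h]
  · conv_lhs => rw [hA.spectral_theorem, Unitary.conjStarAlgAut_apply]
    have : V * diagonal q * star V * (V * diagonal (RCLike.ofReal ∘ hA.eigenvalues) * star V)
        = V * (diagonal q * diagonal (RCLike.ofReal ∘ hA.eigenvalues)) * star V := by
      rw [mul_assoc (V * diagonal q) (star V) _,
        show star V * (V * diagonal (RCLike.ofReal ∘ hA.eigenvalues) * star V)
          = diagonal (RCLike.ofReal ∘ hA.eigenvalues) * star V from by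
            rw [← mul_assoc, ← mul_assoc, hVV, one_mul]]
      simp only [← mul_assoc]
    rw [this, Matrix.trace_mul_comm, ← mul_assoc, hVV, one_mul, diagonal_mul_diagonal,
      Matrix.trace_diagonal, trPos, dif_pos hA, Complex.re_sum]
    apply Finset.sum_congr rfl
    intro i _
    by_cases h : 0 ≤ hA.eigenvalues i
    · simp [hq, h, max_eq_left h]
    · simp [hq, h, max_eq_right (le_of_not_ge h)]

lemma trPos_mono {A B : Matrix n n ℂ} (hA : A.IsHermitian) (hB : B.IsHermitian)
    (hAB : (B - A).PosSemidef) : trPos A ≤ trPos B := by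
  obtain ⟨Q, hQ, hQ1, hQA⟩ := exists_proj hA
  have h1 : 0 ≤ ((Q * (B - A)).trace).re := psd_trace_mul_re_nonneg hQ hAB
  have h2 : (Q * (B - A)).trace = (Q * B).trace - (Q * A).trace := by
    rw [Matrix.mul_sub, Matrix.trace_sub]
  rw [h2, Complex.sub_re] at h1
  have h3 : ((Q * B).trace).re ≤ trPos B := re_trace_mul_le_trPos hQ hQ1 hB
  linarith [hQA ▸ h1]

lemma trPos_of_psd {A : Matrix n n ℂ} (hA : A.PosSemidef) : trPos A = A.trace.re := by
  rw [trPos, dif_pos hA.1, trace_eq_sum_eigen hA.1, Complex.re_sum]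
  exact Finset.sum_congr rfl fun i _ => by
    simpa [max_eq_left (hA.eigenvalues_nonneg i)] using rfl

lemma trPos_eq_zero_of_neg {A : Matrix n n ℂ} (hA : A.IsHermitian)
    (h : (-A).PosSemidef) : trPos A = 0 := by
  rw [trPos, dif_pos hA]
  refine Finset.sum_eq_zero fun i _ => ?_
  refine max_eq_right ?_
  have hv := h.dotProduct_mulVec_nonneg (hA.eigenvectorBasis i)
  rw [Matrix.neg_mulVec, dotProduct_neg] at hv
  have h0 := hv.1
  simp only [Complex.zero_re, Complex.neg_re] at h0
  rw [hA.eigenvalues_eq]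
  have hre : (RCLike.re : ℂ →+ ℝ) = Complex.reAddGroupHom := rfl
  show (RCLike.re (dotProduct _ _) : ℝ) ≤ 0
  simp only [RCLike.re_to_complex]
  exact neg_nonneg.mp h0

lemma real_smul_hermitian {A : Matrix n n ℂ} (hA : A.IsHermitian) (c : ℝ) :
    ((c : ℂ) • A).IsHermitian := by
  unfold Matrix.IsHermitian
  rw [Matrix.conjTranspose_smul, hA.eq]
  norm_num

lemma psd_smul {A : Matrix n n ℂ} (hA : A.PosSemidef) {c : ℝ} (hc : 0 ≤ c) :
    ((c : ℂ) • A).PosSemidef := by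
  refine PosSemidef.of_dotProduct_mulVec_nonneg (real_smul_hermitian hA.1 c) fun x => ?_
  rw [Matrix.smul_mulVec, dotProduct_smul]
  have h0 : (0 : ℂ) ≤ (c : ℂ) := by exact_mod_cast Complex.zero_le_real.mpr hc
  exact smul_nonneg h0 (hA.dotProduct_mulVec_nonneg x)

/-- hockey-stick divergence bound under a max-relative entropy constraint. -/
theorem hockeyStick_le_of_le_smul
    {d : ℕ} (ρ ω : Matrix (Fin d) (Fin d) ℂ)
    (hρ : IsState ρ) (hω : IsState ω)
    (M : ℝ) (hM : 0 < M) (hop : ((M : ℂ) • ω - ρ).PosSemidef)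
    (γ : ℝ) (hγ0 : 0 ≤ γ) (hγM : γ ≤ M) :
    trPos (ρ - (γ : ℂ) • ω) ≤ 1 - γ / M ∧
    ∀ γ' : ℝ, M ≤ γ' → trPos (ρ - (γ' : ℂ) • ω) = 0 := by
  have hρH := hρ.1.1
  have hωH := hω.1.1
  constructor
  · have hγH : (ρ - (γ : ℂ) • ω).IsHermitian := hρH.sub (real_smul_hermitian hωH γ)
    have hBH : (((1 - γ / M : ℝ) : ℂ) • ρ).IsHermitian := real_smul_hermitian hρH _
    have hkey : ((1 - γ / M : ℝ) : ℂ) • ρ - (ρ - (γ : ℂ) • ω)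
        = ((γ / M : ℝ) : ℂ) • ((M : ℂ) • ω - ρ) := by
      ext i j
      simp only [Matrix.sub_apply, Matrix.smul_apply, smul_eq_mul]
      push_cast
      field_simp
      ring
    have hpsd : (((1 - γ / M : ℝ) : ℂ) • ρ - (ρ - (γ : ℂ) • ω)).PosSemidef := by
      rw [hkey]; exact psd_smul hop (div_nonneg hγ0 hM.le)
    have h1 := trPos_mono hγH hBH hpsd
    have h2 : trPos (((1 - γ / M : ℝ) : ℂ) • ρ) = 1 - γ / M := by
      have hle : (0 : ℝ) ≤ 1 - γ / M := by
        have : γ / M ≤ 1 := (div_le_one hM).mpr hγM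
        linarith
      rw [trPos_of_psd (psd_smul hρ.1 hle), Matrix.trace_smul, hρ.2]
      simp
    linarith [h2 ▸ h1]
  · intro γ' hγ'
    have hγH : (ρ - (γ' : ℂ) • ω).IsHermitian := hρH.sub (real_smul_hermitian hωH γ')
    apply trPos_eq_zero_of_neg hγH
    have hkey : -(ρ - (γ' : ℂ) • ω) = ((M : ℂ) • ω - ρ) + ((γ' - M : ℝ) : ℂ) • ω := by
      ext i j
      simp only [Matrix.neg_apply, Matrix.sub_apply, Matrix.add_apply, Matrix.smul_apply,
        smul_eq_mul]
      push_cast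
      ring
    rw [hkey]
    exact hop.add (psd_smul hω.1 (by linarith))

end QIT
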